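/- Let V be a finite-dimensional real inner product space and let g : [0,∞) → L(V) be a semigroup satisfying the boundedness assumption. Suppose V = V_1 ⊕ V_2 is a decomposition into subspaces invariant under all g(x) such that g(x) restricted to V_1 is invertible for all x ≥ 0 and g(x) restricted to V_2 is zero for all x > 0. Then V_1 and V_2 are orthogonal: ⟨v, u⟩ = 0 for all v ∈ V_1 and u ∈ V_2. -/

import Mathlib

open MeasureTheory Metric Module

/-- Auxiliary: iterated multiplicativity. -/
lemma aux_pow (D : ℝ → ℝ)
    (hDadd : ∀ s t : ℝ, 0 < s → 0 < t → D (s + t) = D s * D t) :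
    ∀ t : ℝ, 0 < t → ∀ n : ℕ, D ((n + 1) * t) = D t ^ (n + 1) := by
  intro t ht n
  induction n with
  | zero => simp
  | succ n ih =>
    have h2 : 0 < ((n : ℝ) + 1) * t := by positivity
    have h1 : (((n:ℕ) + 1 : ℕ) : ℝ) + 1 = ((n : ℝ) + 1) + 1 := by push_cast; ring
    rw [h1]
    have h3 : ((n : ℝ) + 1 + 1) * t = ((n : ℝ) + 1) * t + t := by ring
    rw [h3, hDadd _ _ h2 ht, ih]
    ring

/-- Auxiliary measure-theoretic core lemma. -/
lemma aux_main {E : Type*} [NormedAddCommGroup E] [NormedSpace ℝ E]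
    [FiniteDimensional ℝ E] [MeasurableSpace E] [BorelSpace E]
    (μ : Measure E) [μ.IsAddHaarMeasure]
    (S : Set E) (hSb : Bornology.IsBounded S) (hBS : closedBall (0 : E) 1 ⊆ S)
    (D : ℝ → ℝ) (hDpos : ∀ x : ℝ, 0 < x → 0 < D x)
    (hDadd : ∀ s t : ℝ, 0 < s → 0 < t → D (s + t) = D s * D t)
    (f : ℝ → ℝ) (hf : Filter.Tendsto f (nhdsWithin 0 (Set.Ici 0)) (nhds 1))
    (hfpos : ∀ x : ℝ, 0 < x → 0 ≤ f x)
    (hkey : ∀ x : ℝ, 0 < x → ENNReal.ofReal (D x) * μ S ≤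
      ENNReal.ofReal (f x ^ finrank ℝ E) * μ (closedBall (0 : E) 1)) :
    μ S ≤ μ (closedBall (0 : E) 1) := by
  by_contra hab
  push_neg at hab
  -- finiteness and positivity
  have hBpos : 0 < μ (closedBall (0 : E) 1) := measure_closedBall_pos μ 0 one_pos
  obtain ⟨R, hR⟩ := hSb.subset_closedBall 0
  have hSfin : μ S ≠ ⊤ :=
    ((measure_mono hR).trans_lt (isCompact_closedBall 0 R).measure_lt_top).ne
  have hBfin : μ (closedBall (0 : E) 1) ≠ ⊤ :=
    (isCompact_closedBall 0 1).measure_lt_top.ne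
  set a : ℝ := (μ S).toReal with ha
  set b : ℝ := (μ (closedBall (0 : E) 1)).toReal with hb
  have hbpos : 0 < b := ENNReal.toReal_pos hBpos.ne' hBfin
  have hba : b < a := by
    exact ENNReal.toReal_lt_toReal hBfin hSfin |>.mpr hab
  have hapos : 0 < a := hbpos.trans hba
  set k := finrank ℝ E
  -- real form of the key inequality
  have hkeyR : ∀ x : ℝ, 0 < x → D x * a ≤ f x ^ k * b := by
    intro x hx
    have h := hkey x hx
    have h1 : (ENNReal.ofReal (D x) * μ S).toReal = D x * a := by
      rw [ENNReal.toReal_mul, ENNReal.toReal_ofReal (hDpos x hx).le]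
    have h2 : (ENNReal.ofReal (f x ^ k) * μ (closedBall (0 : E) 1)).toReal
        = f x ^ k * b := by
      rw [ENNReal.toReal_mul, ENNReal.toReal_ofReal (pow_nonneg (hfpos x hx) k)]
    calc D x * a = (ENNReal.ofReal (D x) * μ S).toReal := h1.symm
      _ ≤ (ENNReal.ofReal (f x ^ k) * μ (closedBall (0 : E) 1)).toReal := by
          apply ENNReal.toReal_mono
          · exact ENNReal.mul_ne_top ENNReal.ofReal_ne_top hBfin
          · exact h
      _ = f x ^ k * b := h2
  set ρ : ℝ := b / a with hρ
  have hρpos : 0 < ρ := div_pos hbpos hapos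
  have hρlt : ρ < 1 := (div_lt_one hapos).mpr hba
  have hDle : ∀ x : ℝ, 0 < x → D x ≤ f x ^ k * ρ := by
    intro x hx
    have := hkeyR x hx
    rw [hρ, mul_div_assoc']
    rw [le_div_iff₀ hapos]
    linarith [hkeyR x hx]
  set ρ' : ℝ := (1 + ρ) / 2 with hρ'
  have hρ'lt : ρ' < 1 := by rw [hρ']; linarith
  have hρρ' : ρ < ρ' := by rw [hρ']; linarith
  have hρ'pos : 0 < ρ' := by rw [hρ']; linarith
  -- eventually f y ^ k * ρ < ρ'
  have htend : Filter.Tendsto (fun y => f y ^ k * ρ) (nhdsWithin 0 (Set.Ici 0))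
      (nhds ρ) := by
    have : Filter.Tendsto (fun y => f y ^ k * ρ) (nhdsWithin 0 (Set.Ici 0))
        (nhds (1 ^ k * ρ)) := ((hf.pow k).mul_const ρ)
    simpa using this
  have hev : ∀ᶠ y in nhdsWithin 0 (Set.Ici 0), f y ^ k * ρ < ρ' :=
    htend.eventually (Filter.Tendsto.eventually_lt_const hρρ' Filter.tendsto_id)
  obtain ⟨ε, hε, hevε⟩ := Metric.mem_nhdsWithin_iff.mp hev
  set x : ℝ := ε / 2 with hx
  have hxpos : 0 < x := by positivity
  have hDx : ∀ n : ℕ, D x ≤ ρ' ^ (n + 1) := by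
    intro n
    set t : ℝ := x / (n + 1) with htdef
    have htpos : 0 < t := by positivity
    have htx : ((n : ℝ) + 1) * t = x := by
      rw [htdef]; field_simp
    have htsmall : t < ε := by
      have h1 : t ≤ x := by
        rw [htdef]
        apply div_le_self hxpos.le
        push_cast; linarith [Nat.cast_nonneg (α := ℝ) n]
      have : x < ε := by rw [hx]; linarith
      linarith
    have hDt : D t < ρ' := by
      have : f t ^ k * ρ < ρ' := hevε ⟨by simpa [Real.dist_eq, abs_of_pos htpos] using htsmall, Set.mem_Ici.mpr htpos.le⟩
      calc D t ≤ f t ^ k * ρ := hDle t htpos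
        _ < ρ' := this
    have hpow := aux_pow D hDadd t htpos n
    have : D x = D t ^ (n + 1) := by
      rw [← hpow]; congr 1; push_cast at htx ⊢; linarith [htx]
    rw [this]
    exact pow_le_pow_left₀ (hDpos t htpos).le hDt.le (n + 1)
  obtain ⟨n, hn⟩ := exists_pow_lt_of_lt_one (hDpos x hxpos) hρ'lt
  have h1 : D x ≤ ρ' ^ (n + 1) := hDx n
  have h2 : ρ' ^ (n + 1) ≤ ρ' ^ n := pow_le_pow_of_le_one hρ'pos.le hρ'lt.le (by omega)
  linarith

set_option maxHeartbeats 2000000 in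
/-- Under the boundedness assumption, the invertible part `V₁` and the
degenerate part `V₂` of the decomposition are orthogonal. -/
theorem decomposition_orthogonal
    {V : Type*} [NormedAddCommGroup V] [InnerProductSpace ℝ V] [FiniteDimensional ℝ V]
    (g : ℝ → V →L[ℝ] V)
    (hg0 : g 0 = 1)
    (hgadd : ∀ x y : ℝ, 0 ≤ x → 0 ≤ y → g (x + y) = g x * g y)
    (f : ℝ → ℝ)
    (hf0 : f 0 = 1)
    (hf_rc : ContinuousWithinAt f (Set.Ici 0) 0)
    (hf_loc : ∀ K : Set ℝ, IsCompact K → ∃ C : ℝ, ∀ x ∈ K, |f x| ≤ C)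
    (hgf : ∀ x : ℝ, 0 ≤ x → ‖g x‖ ≤ f x)
    (V₁ V₂ : Submodule ℝ V)
    (hcompl : IsCompl V₁ V₂)
    (hinv₁ : ∀ x : ℝ, 0 ≤ x → ∀ v ∈ V₁, g x v ∈ V₁)
    (hinv₂ : ∀ x : ℝ, 0 ≤ x → ∀ v ∈ V₂, g x v ∈ V₂)
    (hbij : ∀ x : ℝ, 0 ≤ x →
      Submodule.map (g x : V →ₗ[ℝ] V) V₁ = V₁ ∧ Disjoint (LinearMap.ker (g x : V →ₗ[ℝ] V)) V₁)
    (hzero : ∀ x : ℝ, 0 < x → ∀ v ∈ V₂, g x v = 0) :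
    ∀ v ∈ V₁, ∀ u ∈ V₂, (inner ℝ v u : ℝ) = 0 := by
  classical
  -- the projection map Π : V₁ → V onto V₂ᗮ
  set Pr : V →L[ℝ] ↥V₂ᗮ := V₂ᗮ.orthogonalProjectionOnto with hPr
  set Pi : ↥V₁ →ₗ[ℝ] V := (V₂ᗮ.subtype ∘ₗ (Pr : V →ₗ[ℝ] ↥V₂ᗮ)) ∘ₗ V₁.subtype with hPi
  have hPiapply : ∀ v : ↥V₁, Pi v = ((Pr (v : V) : V₂ᗮ) : V) := fun v => rfl
  have hPimem : ∀ v : ↥V₁, Pi v ∈ V₂ᗮ := fun v => (Pr (v : V)).2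
  have hPinorm : ∀ v : ↥V₁, ‖Pi v‖ ≤ ‖v‖ := by
    intro v
    rw [hPiapply]
    have h1 : ‖Pr (v : V)‖ ≤ ‖Pr‖ * ‖(v : V)‖ := Pr.le_opNorm _
    have h2 : ‖Pr‖ ≤ 1 := Submodule.orthogonalProjectionOnto_norm_le _
    have h3 : ‖((Pr (v : V) : V₂ᗮ) : V)‖ = ‖Pr (v : V)‖ := rfl
    have h4 : ‖(v : V)‖ = ‖v‖ := rfl
    nlinarith [norm_nonneg (v : V), norm_nonneg (Pr (v : V))]
  have hsubmem : ∀ v : ↥V₁, (v : V) - Pi v ∈ V₂ := by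
    intro v
    rw [hPiapply]
    have := Submodule.sub_starProjection_mem_orthogonal (K := V₂ᗮ) (v : V)
    rwa [Submodule.orthogonal_orthogonal] at this
  have hPiker : LinearMap.ker Pi = ⊥ := by
    rw [LinearMap.ker_eq_bot']
    intro v hv
    have h1 : (v : V) ∈ V₂ := by
      have := hsubmem v
      rwa [hv, sub_zero] at this
    have h2 : (v : V) = 0 := (Submodule.disjoint_def.mp hcompl.disjoint) _ v.2 h1
    exact Subtype.ext h2
  -- the restricted semigroup on V₁
  set A : ℝ → (↥V₁ →ₗ[ℝ] ↥V₁) := fun x =>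
    LinearMap.restrict (g (max x 0) : V →ₗ[ℝ] V)
      (fun v hv => hinv₁ _ (le_max_right x 0) v hv) with hA
  have hAapp : ∀ x : ℝ, 0 ≤ x → ∀ v : ↥V₁, ((A x v : V)) = g x (v : V) := by
    intro x hx v
    rw [hA]
    simp [LinearMap.restrict_coe_apply, max_eq_left hx]
  -- g x agrees with g x ∘ Pi on V₁, for x > 0
  have hgPi : ∀ x : ℝ, 0 < x → ∀ v : ↥V₁, g x (v : V) = g x (Pi v) := by
    intro x hx v
    have h0 : g x ((v : V) - Pi v) = 0 := hzero x hx _ (hsubmem v)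
    have := map_sub (g x) (v : V) (Pi v)
    rw [h0] at this
    exact sub_eq_zero.mp this.symm
  -- semigroup property of A
  have hAcomp : ∀ x y : ℝ, 0 < x → 0 < y → A (x + y) = A x ∘ₗ A y := by
    intro x y hx hy
    apply LinearMap.ext
    intro v
    apply Subtype.ext
    rw [LinearMap.comp_apply]
    rw [hAapp _ (by linarith : (0:ℝ) ≤ x + y) v, hAapp _ hx.le, hAapp _ hy.le v,
      hgadd x y hx.le hy.le]
    rfl
  set D : ℝ → ℝ := fun x => |LinearMap.det (A x)| with hD
  have hDpos : ∀ x : ℝ, 0 < x → 0 < D x := by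
    intro x hx
    have hker : LinearMap.ker (A x) = ⊥ := by
      rw [LinearMap.ker_eq_bot']
      intro v hv
      have h1 : (v : V) ∈ LinearMap.ker (g x : V →ₗ[ℝ] V) := by
        rw [LinearMap.mem_ker]
        have h := hAapp x hx.le v
        rw [hv] at h
        simpa using h.symm
      have h2 : (v : V) = 0 :=
        (Submodule.disjoint_def.mp (hbij x hx.le).2) _ h1 v.2
      exact Subtype.ext h2
    have hdet : LinearMap.det (A x) ≠ 0 := by
      intro h0
      have := LinearMap.bot_lt_ker_of_det_eq_zero h0
      rw [hker] at this
      exact lt_irrefl _ this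
    exact abs_pos.mpr hdet
  have hDadd : ∀ s t : ℝ, 0 < s → 0 < t → D (s + t) = D s * D t := by
    intro s t hs ht
    rw [hD]
    simp only
    rw [hAcomp s t hs ht, LinearMap.det_comp, abs_mul]
  -- measure setup
  borelize ↥V₁
  set μ : Measure ↥V₁ := (Module.finBasis ℝ ↥V₁).addHaar with hμ
  set S : Set ↥V₁ := Pi ⁻¹' (closedBall 0 1) with hS
  have hBS : closedBall (0 : ↥V₁) 1 ⊆ S := by
    intro v hvmem
    rw [hS, Set.mem_preimage, mem_closedBall, dist_zero_right]
    rw [mem_closedBall, dist_zero_right] at hvmem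
    exact (hPinorm v).trans hvmem
  obtain ⟨K, hKpos, hanti⟩ := Pi.exists_antilipschitzWith hPiker
  have hSb : Bornology.IsBounded S := by
    apply (Metric.isBounded_closedBall (x := (0:↥V₁)) (r := K)).subset
    intro v hvmem
    rw [mem_closedBall, dist_zero_right]
    have h1 : dist v 0 ≤ K * dist (Pi v) (Pi 0) := hanti.le_mul_dist v 0
    rw [map_zero] at h1
    rw [dist_zero_right, dist_zero_right] at h1
    have h2 : ‖Pi v‖ ≤ 1 := by
      rw [hS, Set.mem_preimage, mem_closedBall, dist_zero_right] at hvmem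
      exact hvmem
    calc ‖v‖ ≤ K * ‖Pi v‖ := h1
      _ ≤ K * 1 := mul_le_mul_of_nonneg_left h2 K.coe_nonneg
      _ = K := mul_one _
  have hfpos : ∀ x : ℝ, 0 < x → 0 ≤ f x := fun x hx =>
    (norm_nonneg (g x)).trans (hgf x hx.le)
  have hkey : ∀ x : ℝ, 0 < x → ENNReal.ofReal (D x) * μ S ≤
      ENNReal.ofReal (f x ^ finrank ℝ ↥V₁) * μ (closedBall (0 : ↥V₁) 1) := by
    intro x hx
    have himg : A x '' S ⊆ closedBall (0 : ↥V₁) (f x) := by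
      rintro _ ⟨v, hvS, rfl⟩
      rw [mem_closedBall, dist_zero_right]
      have h1 : ‖A x v‖ = ‖g x (Pi v)‖ := by
        have h0 : ‖A x v‖ = ‖((A x v : V))‖ := rfl
        rw [h0, hAapp x hx.le v, hgPi x hx v]
      have h2 : ‖g x (Pi v)‖ ≤ ‖g x‖ * ‖Pi v‖ := (g x).le_opNorm _
      have h3 : ‖Pi v‖ ≤ 1 := by
        rw [hS, Set.mem_preimage, mem_closedBall, dist_zero_right] at hvS
        exact hvS
      have h4 : ‖g x‖ ≤ f x := hgf x hx.le
      calc ‖A x v‖ = ‖g x (Pi v)‖ := h1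
        _ ≤ ‖g x‖ * ‖Pi v‖ := h2
        _ ≤ f x * 1 := mul_le_mul h4 h3 (norm_nonneg _) ((norm_nonneg (g x)).trans h4)
        _ = f x := mul_one _
    calc ENNReal.ofReal (D x) * μ S = μ (A x '' S) :=
        (μ.addHaar_image_linearMap (A x) S).symm
      _ ≤ μ (closedBall 0 (f x)) := measure_mono himg
      _ = ENNReal.ofReal (f x ^ finrank ℝ ↥V₁) * μ (closedBall 0 1) :=
          μ.addHaar_closedBall' 0 (hfpos x hx)
  have hftend : Filter.Tendsto f (nhdsWithin 0 (Set.Ici 0)) (nhds 1) := by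
    have := hf_rc
    rw [ContinuousWithinAt, hf0] at this
    exact this
  have hmain : μ S ≤ μ (closedBall (0 : ↥V₁) 1) :=
    aux_main μ S hSb hBS D hDpos hDadd f hftend hfpos hkey
  -- final argument
  intro v hv u hu
  by_contra hvu
  set v' : ↥V₁ := ⟨v, hv⟩ with hv'
  have hcoe : (v' : V) = v := rfl
  have hinner0 : (inner ℝ (Pi v') u : ℝ) = 0 := by
    have hm := hPimem v'
    rw [Submodule.mem_orthogonal] at hm
    rw [real_inner_comm]
    exact hm u hu
  have hsubne : v - Pi v' ≠ 0 := by
    intro h0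
    apply hvu
    have h1 : (inner ℝ (v - Pi v') u : ℝ) = inner ℝ v u - inner ℝ (Pi v') u :=
      inner_sub_left _ _ _
    rw [h0, inner_zero_left, hinner0, sub_zero] at h1
    exact h1.symm
  have horth : (inner ℝ (Pi v') (v - Pi v') : ℝ) = 0 := by
    have hm2 := hsubmem v'
    rw [hcoe] at hm2
    have hm := hPimem v'
    rw [Submodule.mem_orthogonal] at hm
    rw [real_inner_comm]
    exact hm _ hm2
  have hpyth : ‖v‖ ^ 2 = ‖Pi v'‖ ^ 2 + ‖v - Pi v'‖ ^ 2 := by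
    have hdecomp : v = Pi v' + (v - Pi v') := by abel
    nth_rewrite 1 [hdecomp]
    rw [norm_add_sq_real, horth]
    ring
  have hlt : ‖Pi v'‖ < ‖v‖ := by
    have h1 : 0 < ‖v - Pi v'‖ := norm_pos_iff.mpr hsubne
    clear hkey hmain hDpos hDadd hAapp hgPi hAcomp hSb hBS
    nlinarith [norm_nonneg (Pi v'), norm_nonneg v]
  have hPiv'nn : 0 ≤ ‖Pi v'‖ := norm_nonneg _
  set s : ℝ := 2 / (‖Pi v'‖ + ‖v‖) with hsdef
  have hden : 0 < ‖Pi v'‖ + ‖v‖ := by linarith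
  have hspos : 0 < s := by positivity
  set w : ↥V₁ := s • v' with hwdef
  have hv'norm : ‖v'‖ = ‖v‖ := rfl
  have hwnorm : ‖w‖ = s * ‖v‖ := by
    rw [hwdef, norm_smul, Real.norm_eq_abs, abs_of_pos hspos, hv'norm]
  have hPiw : ‖Pi w‖ = s * ‖Pi v'‖ := by
    rw [hwdef, _root_.map_smul, norm_smul, Real.norm_eq_abs, abs_of_pos hspos]
  have hw1 : 1 < ‖w‖ := by
    rw [hwnorm, hsdef]
    rw [div_mul_eq_mul_div, lt_div_iff₀ hden]
    linarith
  have hw2 : ‖Pi w‖ < 1 := by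
    rw [hPiw, hsdef]
    rw [div_mul_eq_mul_div, div_lt_one hden]
    linarith
  set ε : ℝ := min (1 - ‖Pi w‖) (‖w‖ - 1) with hεdef
  have hεpos : 0 < ε := lt_min (by linarith) (by linarith)
  have hball : ball w ε ⊆ S \ closedBall 0 1 := by
    intro z hz
    rw [mem_ball] at hz
    have hzw : ‖z - w‖ < ε := by rwa [dist_eq_norm] at hz
    constructor
    · rw [hS, Set.mem_preimage, mem_closedBall, dist_zero_right]
      have h1 : ‖Pi z‖ ≤ ‖Pi w‖ + ‖Pi (z - w)‖ := by
        have hdz : Pi z = Pi w + Pi (z - w) := by rw [map_sub]; abel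
        rw [hdz]; exact norm_add_le _ _
      have h2 : ‖Pi (z - w)‖ ≤ ‖z - w‖ := hPinorm _
      have h3 : ε ≤ 1 - ‖Pi w‖ := min_le_left _ _
      linarith
    · intro hmem
      rw [mem_closedBall, dist_zero_right] at hmem
      have h4 : ‖w‖ - ‖z‖ ≤ ‖w - z‖ := norm_sub_norm_le _ _
      have h4' : ‖w - z‖ = ‖z - w‖ := norm_sub_rev _ _
      have h5 : ε ≤ ‖w‖ - 1 := min_le_right _ _
      linarith
  have hBfin : μ (closedBall (0 : ↥V₁) 1) ≠ ⊤ :=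
    (isCompact_closedBall (0 : ↥V₁) 1).measure_lt_top.ne
  have hdiff : μ (S \ closedBall 0 1) = 0 := by
    rw [measure_diff hBS measurableSet_closedBall.nullMeasurableSet hBfin]
    exact tsub_eq_zero_of_le hmain
  have h6 : μ (ball w ε) = 0 := by
    have := measure_mono (μ := μ) hball
    rw [hdiff] at this
    exact le_antisymm this zero_le
  have h7 : 0 < μ (ball w ε) := measure_ball_pos μ w hεpos
  rw [h6] at h7
  exact lt_irrefl _ h7
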